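/- Let h : ℝ → ℝ be differentiable and let b, m, ε ∈ ℝ. Suppose u : ℝ → ℝ → ℝ is C² on ℝ × (0,∞) and satisfies u_t(t,r) = h'(u_r(t,r))·u_rr(t,r) + (m/r)·h(u_r(t,r)) + b for all t ∈ ℝ and r > 0. Define v(t,r) = exp(ε)·((exp(ε) − 1)·b·exp(−2ε)·t + u(exp(−2ε)·t, exp(−ε)·r)). Then v satisfies the same equation, v_t(t,r) = h'(v_r(t,r))·v_rr(t,r) + (m/r)·h(v_r(t,r)) + b, for all t ∈ ℝ and r > 0. -/

import Mathlib

noncomputable section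

/-- Partial derivative in the first (time) variable. -/
def partial_t (u : ℝ → ℝ → ℝ) (t r : ℝ) : ℝ := deriv (fun s => u s r) t

/-- Partial derivative in the second (space) variable. -/
def partial_r (u : ℝ → ℝ → ℝ) (t r : ℝ) : ℝ := deriv (fun s => u t s) r

/-- Second partial derivative in the second (space) variable. -/
def partial_rr (u : ℝ → ℝ → ℝ) (t r : ℝ) : ℝ := deriv (deriv (fun s => u t s)) r

/-- Mixed partial derivative: first in space, then in time. -/
def partial_tr (u : ℝ → ℝ → ℝ) (t r : ℝ) : ℝ := deriv (fun s => deriv (fun y => u s y) r) t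

/-- `u` is C² on ℝ × (0,∞): `u`, `u_t`, `u_r`, `u_rr` and the mixed partial `u_tr`
exist and are continuous there. -/
def IsC2On (u : ℝ → ℝ → ℝ) : Prop :=
  (∀ t r : ℝ, 0 < r → DifferentiableAt ℝ (fun s => u s r) t) ∧
  (∀ t r : ℝ, 0 < r → DifferentiableAt ℝ (fun s => u t s) r) ∧
  (∀ t r : ℝ, 0 < r → DifferentiableAt ℝ (deriv (fun s => u t s)) r) ∧
  (∀ t r : ℝ, 0 < r → DifferentiableAt ℝ (fun s => deriv (fun y => u s y) r) t) ∧
  ContinuousOn (fun q : ℝ × ℝ => u q.1 q.2) {q : ℝ × ℝ | 0 < q.2} ∧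
  ContinuousOn (fun q : ℝ × ℝ => partial_t u q.1 q.2) {q : ℝ × ℝ | 0 < q.2} ∧
  ContinuousOn (fun q : ℝ × ℝ => partial_r u q.1 q.2) {q : ℝ × ℝ | 0 < q.2} ∧
  ContinuousOn (fun q : ℝ × ℝ => partial_rr u q.1 q.2) {q : ℝ × ℝ | 0 < q.2} ∧
  ContinuousOn (fun q : ℝ × ℝ => partial_tr u q.1 q.2) {q : ℝ × ℝ | 0 < q.2}

/-- The scaling and time-dependent-shift point symmetry X₅ of the 1-dimensional
nonlinear diffusion-reaction equation with constant source `b`. -/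
theorem symmetry_X5 (h : ℝ → ℝ) (hh : Differentiable ℝ h) (b m ε : ℝ)
    (u : ℝ → ℝ → ℝ) (hu : IsC2On u)
    (hpde : ∀ t r : ℝ, 0 < r →
      partial_t u t r = deriv h (partial_r u t r) * partial_rr u t r
        + (m / r) * h (partial_r u t r) + b)
    (v : ℝ → ℝ → ℝ)
    (hv : ∀ t r : ℝ,
      v t r = Real.exp ε * ((Real.exp ε - 1) * b * (Real.exp (-2 * ε) * t)
        + u (Real.exp (-2 * ε) * t) (Real.exp (-ε) * r))) :
    ∀ t r : ℝ, 0 < r →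
      partial_t v t r = deriv h (partial_r v t r) * partial_rr v t r
        + (m / r) * h (partial_r v t r) + b := by
  intro t r hr
  set E := Real.exp ε with hE
  set a := Real.exp (-2 * ε) with ha
  set c := Real.exp (-ε) with hc
  have hEpos : 0 < E := Real.exp_pos ε
  have hcpos : 0 < c := Real.exp_pos _
  have hEc : E * c = 1 := by
    rw [hE, hc, ← Real.exp_add]; simp
  have hEa : E * a = c := by
    rw [hE, ha, hc, ← Real.exp_add]; ring_nf
  set t' := a * t with ht'
  have hr' : 0 < c * r := mul_pos hcpos hr
  -- derivative in r, at every point s > 0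
  have key_r : ∀ s : ℝ, 0 < s → HasDerivAt (fun y => v t y) (partial_r u t' (c * s)) s := by
    intro s hs
    have hcs : 0 < c * s := mul_pos hcpos hs
    have h1 : HasDerivAt (fun y => u t' y) (partial_r u t' (c * s)) (c * s) :=
      ((hu.2.1 t' (c * s) hcs).hasDerivAt)
    have h2 : HasDerivAt (fun y : ℝ => c * y) c s := by
      simpa using (hasDerivAt_id s).const_mul c
    have h3 : HasDerivAt (fun y => u t' (c * y)) (partial_r u t' (c * s) * c) s :=
      HasDerivAt.comp s h1 h2
    have h4 : HasDerivAt (fun y => E * ((E - 1) * b * t' + u t' (c * y)))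
        (E * (partial_r u t' (c * s) * c)) s := by
      exact ((h3.const_add ((E - 1) * b * t')).const_mul E)
    have heq : (fun y => v t y) = fun y => E * ((E - 1) * b * t' + u t' (c * y)) := by
      funext y; rw [hv]
    rw [heq]
    have : E * (partial_r u t' (c * s) * c) = partial_r u t' (c * s) := by
      calc E * (partial_r u t' (c * s) * c) = (E * c) * partial_r u t' (c * s) := by ring
        _ = partial_r u t' (c * s) := by rw [hEc]; ring
    rwa [this] at h4
  have hvr : partial_r v t r = partial_r u t' (c * r) := (key_r r hr).deriv
  -- second derivative in r
  have hvrr : partial_rr v t r = partial_rr u t' (c * r) * c := by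
    have hev : deriv (fun y => v t y) =ᶠ[nhds r] fun s => partial_r u t' (c * s) := by
      filter_upwards [eventually_gt_nhds hr] with s hs
      exact (key_r s hs).deriv
    have h1 : HasDerivAt (deriv (fun y => u t' y)) (partial_rr u t' (c * r)) (c * r) :=
      (hu.2.2.1 t' (c * r) hr').hasDerivAt
    have h2 : HasDerivAt (fun y : ℝ => c * y) c r := by
      simpa using (hasDerivAt_id r).const_mul c
    have h3 : HasDerivAt (fun s => partial_r u t' (c * s)) (partial_rr u t' (c * r) * c) r := by
      have := HasDerivAt.comp r h1 h2
      exact this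
    calc partial_rr v t r = deriv (fun s => partial_r u t' (c * s)) r := hev.deriv_eq
      _ = partial_rr u t' (c * r) * c := h3.deriv
  -- derivative in t
  have hvt : partial_t v t r = E * ((E - 1) * b * a + partial_t u t' (c * r) * a) := by
    have h1 : HasDerivAt (fun s => u s (c * r)) (partial_t u t' (c * r)) t' :=
      (hu.1 t' (c * r) hr').hasDerivAt
    have h2 : HasDerivAt (fun s : ℝ => a * s) a t := by
      simpa using (hasDerivAt_id t).const_mul a
    have h3 : HasDerivAt (fun s => u (a * s) (c * r)) (partial_t u t' (c * r) * a) t :=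
      HasDerivAt.comp t h1 h2
    have h4 : HasDerivAt (fun s : ℝ => (E - 1) * b * (a * s)) ((E - 1) * b * a) t := by
      simpa [mul_assoc] using h2.const_mul ((E - 1) * b)
    have h5 : HasDerivAt (fun s => E * ((E - 1) * b * (a * s) + u (a * s) (c * r)))
        (E * ((E - 1) * b * a + partial_t u t' (c * r) * a)) t := (h4.add h3).const_mul E
    have heq : (fun s => v s r) = fun s => E * ((E - 1) * b * (a * s) + u (a * s) (c * r)) := by
      funext s; rw [hv]
    rw [partial_t, heq]
    exact h5.deriv
  rw [hvt, hvr, hvrr, hpde t' (c * r) hr']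
  have hrne : r ≠ 0 := ne_of_gt hr
  have hcne : c ≠ 0 := ne_of_gt hcpos
  have haa : a = c * c := by rw [ha, hc, ← Real.exp_add]; ring_nf
  have hEinv : E = c⁻¹ := by
    field_simp [hc, hE, ← Real.exp_add]
    exact hEc
  rw [haa, hEinv]
  field_simp
  ring
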